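/- Let n ≥ 1 and let t = (t_{i,j,k})_{1 ≤ i < j < k ≤ n} be a family of integers such that the normal form map N_t : ℤ^n → G(t) is bijective. Let t_u = (t_{i,j,k})_{2 ≤ i < j < k ≤ n} be the subfamily of entries with all indices different from 1. Then the normal form map N_{t_u} : ℤ^{n−1} → G(t_u) is also bijective; i.e., if t is consistent then t_u is consistent. -/

import Mathlib

namespace HallPoly

/-- The ordered product `g_1^{e_1} ⋯ g_n^{e_n}` taken in increasing order of indices. -/
def prodPow {Γ : Type*} [Group Γ] (n : ℕ) (g : Fin n → Γ) (e : Fin n → ℤ) : Γ :=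
  ((List.finRange n).map fun k => g k ^ e k).prod

/-- The relators of the presented group `G(t)`:
`(a_i · a_j · a_{j+1}^{t_{i,j,j+1}} ⋯ a_n^{t_{i,j,n}})⁻¹ · (a_j · a_i)` for `1 ≤ i < j ≤ n`. -/
def rels (n : ℕ) (t : Fin n → Fin n → Fin n → ℤ) : Set (FreeGroup (Fin n)) :=
  { r | ∃ i j : Fin n, i < j ∧
      r = (FreeGroup.of i * FreeGroup.of j *
            prodPow n FreeGroup.of (fun k => if j < k then t i j k else 0))⁻¹ *
          (FreeGroup.of j * FreeGroup.of i) }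

/-- The presented group `G(t)` with generators `a_1, …, a_n` and relations
`a_j·a_i = a_i·a_j·a_{j+1}^{t_{i,j,j+1}} ⋯ a_n^{t_{i,j,n}}` for `1 ≤ i < j ≤ n`. -/
abbrev G (n : ℕ) (t : Fin n → Fin n → Fin n → ℤ) : Type := PresentedGroup (rels n t)

/-- The generators `a_1, …, a_n` of `G(t)`. -/
def a (n : ℕ) (t : Fin n → Fin n → Fin n → ℤ) (i : Fin n) : G n t :=
  PresentedGroup.of i

/-- The normal form map `N_t : ℤⁿ → G(t)`, `x ↦ a_1^{x_1} ⋯ a_n^{x_n}`. -/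
def N (n : ℕ) (t : Fin n → Fin n → Fin n → ℤ) (x : Fin n → ℤ) : G n t :=
  prodPow n (a n t) x

lemma map_prodPow {Γ Γ' : Type*} [Group Γ] [Group Γ'] (φ : Γ →* Γ') (n : ℕ)
    (g : Fin n → Γ) (e : Fin n → ℤ) :
    φ (prodPow n g e) = prodPow n (fun k => φ (g k)) e := by
  simp [prodPow, map_list_prod, List.map_map, Function.comp_def]

lemma prodPow_succ {Γ : Type*} [Group Γ] (n : ℕ) (g : Fin (n+1) → Γ) (e : Fin (n+1) → ℤ) :
    prodPow (n+1) g e = g 0 ^ e 0 * prodPow n (fun k => g k.succ) (fun k => e k.succ) := by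
  simp [prodPow, List.finRange_succ, List.map_map, Function.comp_def]

lemma prodPow_zero_exp {Γ : Type*} [Group Γ] (n : ℕ) (g : Fin n → Γ) :
    prodPow n g (fun _ => 0) = 1 := by
  simp [prodPow]

lemma prodPow_drop {Γ : Type*} [Group Γ] (n : ℕ) (g : Fin n → Γ) (e : Fin n → ℤ) (k : ℕ)
    (he : ∀ i : Fin n, i.val < k → e i = 0) :
    prodPow n g e = (((List.finRange n).drop k).map fun i => g i ^ e i).prod := by
  have h1 : (List.finRange n).map (fun i => g i ^ e i)
      = ((List.finRange n).take k).map (fun i => g i ^ e i)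
        ++ ((List.finRange n).drop k).map (fun i => g i ^ e i) := by
    rw [← List.map_append, List.take_append_drop]
  have h2 : (((List.finRange n).take k).map fun i => g i ^ e i).prod = 1 := by
    apply List.prod_eq_one
    intro x hx
    rw [List.mem_map] at hx
    obtain ⟨i, hi, rfl⟩ := hx
    rw [List.mem_iff_getElem] at hi
    obtain ⟨p, hp, hpe⟩ := hi
    have hlen := hp
    simp only [List.length_take, List.length_finRange] at hlen
    have : i.val < k := by
      rw [List.getElem_take, List.getElem_finRange] at hpe
      have := congrArg Fin.val hpe
      simp at this
      omega
    rw [he i this, zpow_zero]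
  rw [prodPow, h1, List.prod_append, h2, one_mul]

lemma val_ge_of_mem_drop {n k : ℕ} {i : Fin n} (h : i ∈ (List.finRange n).drop k) : k ≤ i.val := by
  rw [List.mem_iff_getElem] at h
  obtain ⟨p, hp, hpe⟩ := h
  rw [List.getElem_drop, List.getElem_finRange] at hpe
  have := congrArg Fin.val hpe
  simp at this
  omega

lemma drop_finRange_eq_cons {n k : ℕ} (hk : k < n) :
    (List.finRange n).drop k = ⟨k, hk⟩ :: (List.finRange n).drop (k + 1) := by
  rw [List.drop_eq_getElem_cons (by simpa using hk), List.getElem_finRange]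
  rfl

/-- splitting off the `k`-th factor when exponents vanish below `k`. -/
lemma prodPow_split {Γ : Type*} [Group Γ] (n : ℕ) (g : Fin n → Γ) (e : Fin n → ℤ) (k : ℕ)
    (hk : k < n) (he : ∀ i : Fin n, i.val < k → e i = 0) :
    prodPow n g e = g ⟨k, hk⟩ ^ e ⟨k, hk⟩ *
      (((List.finRange n).drop (k+1)).map fun i => g i ^ e i).prod := by
  rw [prodPow_drop n g e k he, drop_finRange_eq_cons hk, List.map_cons, List.prod_cons]

variable {n : ℕ} {t : Fin n → Fin n → Fin n → ℤ}

/-- the correction word `w i j`. -/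
def w (t : Fin n → Fin n → Fin n → ℤ) (i j : Fin n) : G n t :=
  prodPow n (a n t) (fun k => if j < k then t i j k else 0)

lemma rel (i j : Fin n) (hij : i < j) :
    a n t j * a n t i = a n t i * a n t j * w t i j := by
  have hr : ((FreeGroup.of i * FreeGroup.of j *
      prodPow n FreeGroup.of (fun k => if j < k then t i j k else 0))⁻¹ *
      (FreeGroup.of j * FreeGroup.of i)) ∈ Subgroup.normalClosure (rels n t) :=
    Subgroup.subset_normalClosure ⟨i, j, hij, rfl⟩
  have h1 : PresentedGroup.mk (rels n t) ((FreeGroup.of i * FreeGroup.of j *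
      prodPow n FreeGroup.of (fun k => if j < k then t i j k else 0))⁻¹ *
      (FreeGroup.of j * FreeGroup.of i)) = 1 := by
    rw [← QuotientGroup.eq_one_iff] at hr
    exact hr
  rw [map_mul, map_inv, map_mul, map_mul, map_prodPow] at h1
  change (a n t i * a n t j * _)⁻¹ * (a n t j * a n t i) = 1 at h1
  rw [inv_mul_eq_one] at h1
  rw [w]
  exact h1.symm

/-- subgroup generated by the generators of index `≥ k`. -/
def H (t : Fin n → Fin n → Fin n → ℤ) (k : ℕ) : Subgroup (G n t) :=
  Subgroup.closure { g | ∃ i : Fin n, k ≤ i.val ∧ g = a n t i }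

lemma a_mem_H {k : ℕ} {i : Fin n} (h : k ≤ i.val) : a n t i ∈ H t k :=
  Subgroup.subset_closure ⟨i, h, rfl⟩

lemma prodPow_mem_H (k : ℕ) (x : Fin n → ℤ) (hx : ∀ i : Fin n, i.val < k → x i = 0) :
    prodPow n (a n t) x ∈ H t k := by
  apply list_prod_mem
  intro g hg
  rw [List.mem_map] at hg
  obtain ⟨i, _, rfl⟩ := hg
  by_cases h : i.val < k
  · rw [hx i h, zpow_zero]; exact one_mem _
  · exact zpow_mem (a_mem_H (by omega)) _

lemma w_mem_H (i j : Fin n) : w t i j ∈ H t (j.val + 1) := by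
  apply prodPow_mem_H
  intro l hl
  rw [if_neg]
  intro hc
  exact absurd hc.le (by omega)

lemma H_mono {k k' : ℕ} (h : k ≤ k') : H t k' ≤ H t k := by
  apply Subgroup.closure_mono
  rintro g ⟨i, hi, rfl⟩
  exact ⟨i, by omega, rfl⟩

lemma conj_set_le (g : G n t) (m k : ℕ)
    (hg : ∀ l : Fin n, m ≤ l.val → g * a n t l * g⁻¹ ∈ H t k) :
    ∀ h ∈ H t m, g * h * g⁻¹ ∈ H t k := by
  intro h hh
  have hmap : Subgroup.map ((MulAut.conj g).toMonoidHom) (H t m) ≤ H t k := by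
    rw [H, MonoidHom.map_closure, Subgroup.closure_le]
    rintro _ ⟨x, ⟨l, hl, rfl⟩, rfl⟩
    simpa using hg l hl
  have : g * h * g⁻¹ = (MulAut.conj g).toMonoidHom h := by simp
  rw [this]
  exact hmap ⟨h, hh, rfl⟩

lemma conj_inv_mem (k j : Fin n) (h : k < j) :
    (a n t k)⁻¹ * a n t j * a n t k ∈ H t (k.val + 1) := by
  have h1 : (a n t k)⁻¹ * a n t j * a n t k = a n t j * w t k j := by
    rw [mul_assoc, rel k j h]; group
  rw [h1]
  exact mul_mem (a_mem_H (by exact h)) (H_mono (by omega) (w_mem_H k j))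

theorem conj_mem (k j : Fin n) (h : k < j) :
    a n t k * a n t j * (a n t k)⁻¹ ∈ H t (k.val + 1) := by
  have h2 : a n t k * a n t j = a n t j * a n t k * (w t k j)⁻¹ := by
    rw [rel k j h]; group
  have h3 : a n t k * a n t j * (a n t k)⁻¹
      = a n t j * (a n t k * (w t k j)⁻¹ * (a n t k)⁻¹) := by
    rw [h2]; group
  rw [h3]
  refine mul_mem (a_mem_H (by exact h)) ?_
  refine conj_set_le (a n t k) (j.val + 1) (k.val + 1) ?_ _ (inv_mem (w_mem_H k j))
  intro l hl
  have hkl : k < l := lt_trans h (by exact Nat.lt_of_lt_of_le (Nat.lt_succ_self _) hl)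
  exact conj_mem k l hkl
termination_by n - j.val
decreasing_by
  have := l.isLt
  omega

lemma a_mem_normalizer (k : Fin n) : a n t k ∈ Subgroup.normalizer (H t (k.val + 1) : Set (G n t)) := by
  rw [Subgroup.mem_normalizer_iff]
  intro h
  constructor
  · intro hh
    refine conj_set_le (a n t k) (k.val + 1) (k.val + 1) ?_ h hh
    intro l hl
    exact conj_mem k l (by exact Nat.lt_of_lt_of_le (Nat.lt_succ_self _) hl)
  · intro hh
    have h1 : h = (a n t k)⁻¹ * (a n t k * h * (a n t k)⁻¹) * ((a n t k)⁻¹)⁻¹ := by group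
    rw [h1]
    refine conj_set_le (a n t k)⁻¹ (k.val + 1) (k.val + 1) ?_ _ hh
    intro l hl
    simpa using conj_inv_mem k l (by exact Nat.lt_of_lt_of_le (Nat.lt_succ_self _) hl)

theorem exists_normal_form (k : ℕ) (g : G n t) (hg : g ∈ H t k) :
    ∃ x : Fin n → ℤ, (∀ i : Fin n, i.val < k → x i = 0) ∧ g = prodPow n (a n t) x := by
  by_cases hk : n ≤ k
  · have hempty : { g | ∃ i : Fin n, k ≤ i.val ∧ g = a n t i } = (∅ : Set (G n t)) := by
      ext y
      simp only [Set.mem_setOf_eq, Set.mem_empty_iff_false, iff_false, not_exists]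
      intro i ⟨hi, _⟩
      exact absurd hi (by have := i.isLt; omega)
    rw [H, hempty, Subgroup.closure_empty, Subgroup.mem_bot] at hg
    exact ⟨fun _ => 0, fun _ _ => rfl, by rw [hg, prodPow_zero_exp]⟩
  · push_neg at hk
    set c : Fin n := ⟨k, hk⟩ with hc
    have hnorm : ∀ z : ℤ, a n t c ^ z ∈ Subgroup.normalizer (H t (k + 1) : Set (G n t)) :=
      fun z => zpow_mem (a_mem_normalizer c) z
    let S : Subgroup (G n t) :=
      { carrier := { g | ∃ z : ℤ, ∃ h ∈ H t (k + 1), g = a n t c ^ z * h }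
        one_mem' := ⟨0, 1, one_mem _, by simp⟩
        mul_mem' := by
          rintro g1 g2 ⟨z1, h1, hh1, rfl⟩ ⟨z2, h2, hh2, rfl⟩
          refine ⟨z1 + z2, (a n t c ^ (-z2) * h1 * (a n t c ^ (-z2))⁻¹) * h2,
            mul_mem ?_ hh2, by group⟩
          exact ((Subgroup.mem_normalizer_iff.mp (hnorm (-z2))) h1).mp hh1
        inv_mem' := by
          rintro g ⟨z, h, hh, rfl⟩
          refine ⟨-z, a n t c ^ z * h⁻¹ * (a n t c ^ z)⁻¹, ?_, by group⟩
          exact ((Subgroup.mem_normalizer_iff.mp (hnorm z)) h⁻¹).mp (inv_mem hh) }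
    have hle : H t k ≤ S := by
      rw [H, Subgroup.closure_le]
      rintro _ ⟨i, hi, rfl⟩
      rcases eq_or_lt_of_le hi with he | hlt
      · have : i = c := Fin.ext he.symm
        exact ⟨1, 1, one_mem _, by simp [this]⟩
      · exact ⟨0, a n t i, a_mem_H hlt, by simp⟩
    obtain ⟨z, h, hh, rfl⟩ := hle hg
    obtain ⟨x, hx, rfl⟩ := exists_normal_form (k + 1) h hh
    have hne : ∀ i : Fin n, i.val ≠ k → Function.update x c z i = x i := by
      intro i hi
      exact Function.update_of_ne (fun e => hi (by rw [e])) _ _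
    refine ⟨Function.update x c z, ?_, ?_⟩
    · intro i hi
      rw [hne i (by omega)]
      exact hx i (by omega)
    · rw [prodPow_split n (a n t) (Function.update x c z) k hk (fun i hi => by rw [hne i (by omega)]; exact hx i (by omega))]
      rw [Function.update_self]
      congr 1
      rw [prodPow_drop n (a n t) x (k + 1) hx]
      refine congrArg List.prod (List.map_congr_left ?_)
      intro i hi
      rw [hne i (by have := val_ge_of_mem_drop hi; omega)]
termination_by n - k
decreasing_by omega

lemma H_zero : H t 0 = ⊤ := by
  have hset : { g | ∃ i : Fin n, 0 ≤ i.val ∧ g = a n t i }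
      = Set.range (PresentedGroup.of : Fin n → G n t) := by
    ext y
    simp [a, eq_comm]
  rw [H, hset, PresentedGroup.closure_range_of]

theorem N_surjective : Function.Surjective (N n t) := by
  intro g
  obtain ⟨x, _, hg⟩ := exists_normal_form 0 g (by rw [H_zero]; trivial)
  exact ⟨x, hg.symm⟩

/-- If `G(t)` is consistent, then so is `G(t_u)`, where `t_u` is the subfamily of `t` of
entries with all indices different from `1`: the normal form map `N_{t_u} : ℤ^{n-1} → G(t_u)`
is also bijective. -/
theorem consistent_tu (m : ℕ) (t : Fin (m + 1) → Fin (m + 1) → Fin (m + 1) → ℤ)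
    (hN : Function.Bijective (N (m + 1) t))
    (tu : Fin m → Fin m → Fin m → ℤ)
    (htu : ∀ i j k : Fin m, tu i j k = t i.succ j.succ k.succ) :
    Function.Bijective (N m tu) := by
  set f : Fin m → G (m + 1) t := fun i => a (m + 1) t i.succ with hf
  have hw : ∀ i j : Fin m, i < j →
      prodPow m f (fun k => if j < k then tu i j k else 0) = w t i.succ j.succ := by
    intro i j hij
    rw [w, prodPow_succ]
    have h0 : (if j.succ < (0 : Fin (m + 1)) then t i.succ j.succ 0 else 0) = 0 := by
      rw [if_neg (by simp [Fin.lt_def])]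
    rw [h0, zpow_zero, one_mul]
    congr 1
    funext k
    by_cases h : j < k
    · rw [if_pos h, if_pos (Fin.succ_lt_succ_iff.mpr h), htu]
    · rw [if_neg h, if_neg (fun hc => h (Fin.succ_lt_succ_iff.mp hc))]
  have hrel : ∀ r ∈ rels m tu, FreeGroup.lift f r = 1 := by
    rintro r ⟨i, j, hij, rfl⟩
    rw [map_mul, map_inv, map_mul, map_mul, map_prodPow]
    simp only [FreeGroup.lift_apply_of]
    rw [hw i j hij]
    change (f i * f j * w t i.succ j.succ)⁻¹ * (f j * f i) = 1
    rw [hf]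
    simp only []
    rw [← rel i.succ j.succ (Fin.succ_lt_succ_iff.mpr hij)]
    group
  set φ : G m tu →* G (m + 1) t := PresentedGroup.toGroup hrel with hφ
  have hkey : ∀ x : Fin m → ℤ, φ (N m tu x) = N (m + 1) t (Fin.cons 0 x) := by
    intro x
    rw [N, map_prodPow, N, prodPow_succ]
    rw [Fin.cons_zero, zpow_zero, one_mul]
    have hfun : (fun k : Fin m => φ (a m tu k)) = f := by
      funext k
      show φ (PresentedGroup.of k) = _
      rw [hφ, PresentedGroup.toGroup.of]
    have hexp : (fun k : Fin m => (Fin.cons (0 : ℤ) x : Fin (m + 1) → ℤ) k.succ) = x := by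
      funext k
      simp
    rw [hfun, hexp]
  constructor
  · intro x y hxy
    have h1 : N (m + 1) t (Fin.cons 0 x) = N (m + 1) t (Fin.cons 0 y) := by
      rw [← hkey, ← hkey, hxy]
    have h2 := hN.injective h1
    funext i
    have := congrFun h2 i.succ
    rwa [Fin.cons_succ, Fin.cons_succ] at this
  · exact N_surjective

end HallPoly
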